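/- Let ℓ be an odd prime, q an integer not divisible by ℓ, and write ℓ − 1 = 2ⁿ·m with m odd. Then −1 lies in the cyclic subgroup of (ℤ/ℓℤ)× generated by q if and only if the congruence x^{2ⁿ} ≡ q (mod ℓ) has no integer solution. -/
import Mathlib


/-- `-1` lies in the subgroup of `(ℤ/ℓℤ)ˣ` generated by `q` iff `q` is a
`2ⁿ`-th power non-residue mod `ℓ`, where `2ⁿ ‖ ℓ - 1`. -/
theorem neg_one_mem_iff_nonresidue (ℓ : ℕ) [Fact ℓ.Prime] (hodd : Odd ℓ)
    (q : ℤ) (hq : ¬ (ℓ : ℤ) ∣ q)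
    (n : ℕ) (hn : 2 ^ n ∣ ℓ - 1) (hn' : ¬ 2 ^ (n + 1) ∣ ℓ - 1)
    (u : (ZMod ℓ)ˣ) (hu : (u : ZMod ℓ) = (q : ZMod ℓ)) :
    (-1 : (ZMod ℓ)ˣ) ∈ Subgroup.zpowers u ↔
      ¬ ∃ x : ZMod ℓ, x ^ (2 ^ n) = (q : ZMod ℓ) := by
  have hℓ : ℓ.Prime := Fact.out
  have hq0 : (q : ZMod ℓ) ≠ 0 := by
    rw [Ne, ZMod.intCast_zmod_eq_zero_iff_dvd]; exact hq
  set d := orderOf u with hd_def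
  have hdpos : 0 < d := orderOf_pos u
  have hd : d ∣ ℓ - 1 := (ZMod.card_units ℓ) ▸ orderOf_dvd_card
  obtain ⟨m, hm⟩ := hn
  have hmodd : Odd m := by
    rcases Nat.even_or_odd m with ⟨k, hk⟩ | ho
    · exact absurd ⟨k, by rw [hm, hk, pow_succ]; ring⟩ hn'
    · exact ho
  have hne : (-1 : (ZMod ℓ)ˣ) ≠ 1 := by
    intro h
    have h1 : (-1 : ZMod ℓ) = 1 := by simpa using congrArg Units.val h
    have h2 : ((2 : ℕ) : ZMod ℓ) = 0 := by push_cast; linear_combination -h1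
    rw [ZMod.natCast_eq_zero_iff] at h2
    have := (Nat.prime_dvd_prime_iff_eq hℓ Nat.prime_two).mp h2
    rw [this] at hodd
    exact (Nat.not_odd_iff_even.mpr even_two) hodd
  -- `u ^ m = 1` iff `d` is odd
  have keyA : u ^ m = 1 ↔ Odd d := by
    constructor
    · intro h
      have hdm : d ∣ m := orderOf_dvd_of_pow_eq_one h
      rcases Nat.even_or_odd d with ⟨k, hk⟩ | ho
      · obtain ⟨c, hc⟩ := hdm
        exact absurd hmodd (Nat.not_odd_iff_even.mpr ⟨k * c, by rw [hc, hk]; ring⟩)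
      · exact ho
    · intro h
      have hcop : Nat.Coprime d (2 ^ n) := Nat.Coprime.pow_right _ h.coprime_two_right
      have hdm : d ∣ m := hcop.dvd_of_dvd_mul_left (hm ▸ hd)
      exact orderOf_dvd_iff_pow_eq_one.mp hdm
  -- residue iff `u ^ m = 1`
  have keyB : (∃ x : ZMod ℓ, x ^ 2 ^ n = (q : ZMod ℓ)) ↔ u ^ m = 1 := by
    constructor
    · rintro ⟨x, hx⟩
      have hx0 : x ≠ 0 := by
        intro h; rw [h, zero_pow (by positivity)] at hx; exact hq0 hx.symm
      refine Units.ext ?_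
      have : (u : ZMod ℓ) ^ m = 1 := by
        rw [hu, ← hx, ← pow_mul, ← hm, ZMod.pow_card_sub_one_eq_one hx0]
      simpa using this
    · intro h
      have hdodd : Odd d := keyA.mp h
      have hcop : (Nat.card (Subgroup.zpowers u)).Coprime (2 ^ n) := by
        rw [Nat.card_zpowers]
        exact Nat.Coprime.pow_right _ hdodd.coprime_two_right
      obtain ⟨y, hy⟩ := (powCoprime hcop).surjective ⟨u, Subgroup.mem_zpowers u⟩
      have hy' : (y : (ZMod ℓ)ˣ) ^ 2 ^ n = u := by
        have := congrArg (fun z => ((z : Subgroup.zpowers u) : (ZMod ℓ)ˣ)) hy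
        simpa [powCoprime] using this
      refine ⟨((y : (ZMod ℓ)ˣ) : ZMod ℓ), ?_⟩
      rw [← hu]
      exact_mod_cast congrArg Units.val hy'
  -- `-1 ∈ ⟨u⟩` iff `d` is even
  have keyC : (-1 : (ZMod ℓ)ˣ) ∈ Subgroup.zpowers u ↔ ¬ Odd d := by
    rw [Nat.not_odd_iff_even]
    constructor
    · intro hmem
      obtain ⟨k, hk⟩ := Subgroup.mem_zpowers_iff.mp hmem
      by_contra hev
      have hdodd : Odd d := Nat.not_even_iff_odd.mp hev
      have h2k : u ^ (2 * k) = 1 := by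
        rw [mul_comm, zpow_mul, hk, zpow_two]
        simp
      have hdvd : (d : ℤ) ∣ 2 * k := orderOf_dvd_iff_zpow_eq_one.mpr h2k
      have hcop : IsCoprime (d : ℤ) 2 := by
        rw [Int.isCoprime_iff_gcd_eq_one]
        exact hdodd.coprime_two_right
      have : (d : ℤ) ∣ k := hcop.dvd_of_dvd_mul_left hdvd
      have : u ^ k = 1 := orderOf_dvd_iff_zpow_eq_one.mp this
      rw [hk] at this
      exact hne this
    · rintro ⟨e, he⟩
      have hd2e : d = 2 * e := by omega
      have hepos : 0 < e := by omega
      have hv2 : (u ^ e) * (u ^ e) = 1 := by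
        rw [← pow_add, ← two_mul, ← hd2e, hd_def, pow_orderOf_eq_one]
      have hvne : u ^ e ≠ 1 := by
        intro h
        have := orderOf_dvd_of_pow_eq_one h
        rw [← hd_def] at this
        have := Nat.le_of_dvd hepos this
        omega
      have : ((u ^ e : (ZMod ℓ)ˣ) : ZMod ℓ) = 1 ∨ ((u ^ e : (ZMod ℓ)ˣ) : ZMod ℓ) = -1 := by
        rw [← mul_self_eq_one_iff]
        simpa using congrArg Units.val hv2
      rcases this with h | h
      · exact absurd (Units.ext (by simpa using h)) hvne
      · have : (u ^ e : (ZMod ℓ)ˣ) = -1 := Units.ext (by simpa using h)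
        exact Subgroup.mem_zpowers_iff.mpr ⟨(e : ℤ), by rw [zpow_natCast, this]⟩
  rw [keyC]
  exact not_congr (keyA.symm.trans keyB.symm)
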